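/- Let $C, D$ be chain complexes over a commutative ring, and let $G : C \to D$ and $G' : D \to C$ be chain maps such that $G' \circ G$ is chain homotopic to $\mathrm{id}_C$. Let $J : D \to D$ be a chain map with $J \circ J = \mathrm{id}_D$ such that $G \circ G'$ is chain homotopic to $J$. Then $G \circ G'$ is chain homotopic to $\mathrm{id}_D$, and hence $G$ is a chain homotopy equivalence. -/
import Mathlib

open CategoryTheory

/-- **The `J`-trick.**  Let `C, D` be chain complexes over a commutative ring,
`G : C ⟶ D`, `G' : D ⟶ C` chain maps with `G' ∘ G` chain homotopic to `id_C`
(in Mathlib's composition order, `G ≫ G' : C ⟶ C`).  Let `J : D ⟶ D` be a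
chain map with `J ∘ J = id_D` such that `G ∘ G'` (that is, `G' ≫ G : D ⟶ D`)
is chain homotopic to `J`.  Then `G ∘ G'` is chain homotopic to `id_D`, and
hence `G` is a chain homotopy equivalence. -/
theorem homotopy_inverse_of_involution_trick
    (R : Type*) [CommRing R]
    (C D : ChainComplex (ModuleCat R) ℤ)
    (G : C ⟶ D) (G' : D ⟶ C)
    (h₁ : Homotopy (G ≫ G') (𝟙 C))
    (J : D ⟶ D) (hJ : J ≫ J = 𝟙 D)
    (h₂ : Homotopy (G' ≫ G) J) :
    Nonempty (Homotopy (G' ≫ G) (𝟙 D)) ∧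
      ∃ e : HomotopyEquiv C D, e.hom = G := by
  have hstep : Homotopy (G' ≫ G) ((G' ≫ G) ≫ (G' ≫ G)) :=
    ((Homotopy.ofEq (by simp)).trans
      (((h₁.symm.compLeft G').compRight G))).trans (Homotopy.ofEq (by simp))
  have h : Homotopy (G' ≫ G) (𝟙 D) :=
    (hstep.trans (h₂.comp h₂)).trans (Homotopy.ofEq hJ)
  refine ⟨⟨h⟩, ⟨⟨G, G', h₁, h⟩, rfl⟩⟩
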